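/- There exists a function F : ω^ω → τ_N \ {∅} assigning to each x ∈ ω^ω a nonempty τ_N-open set, satisfying: (1) for all x ∈ ω^ω, Cl_{τ_N}(F(x)) = F(x) ∪ {x}; and (2) for every Souslin scheme W that is a regular open π-base Souslin scheme on the Baire space (ω^ω, τ_N) and has nonempty leaves, there exist p, x ∈ ω^ω such that (i) fruit_p(W) = {x}, (ii) shoot_{p↾n}(W) does not → {x} ∪ F(x) for all n ∈ ω, and (iii) for every regular semi-open Souslin scheme V on (ω^ω, τ_N), if Int(V, τ_N) = W then fruit_p(V) = {x}. -/

import Mathlib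

open Set Topology

universe u v

/-- The restriction `p↾n` of `p : ℕ → ℕ`, as a finite sequence in `ω^{<ω}`. -/
def pre (p : ℕ → ℕ) (n : ℕ) : List ℕ := List.ofFn fun i : Fin n => p i

/-- `a ⊑ p` : the finite sequence `a` is an initial segment of the branch `p`. -/
def IsPre (a : List ℕ) (p : ℕ → ℕ) : Prop := a = pre p a.length

/-- `S_a = {p ∈ ω^ω : a ⊑ p}`, the pieces of the standard Lusin scheme. -/
def stdS (a : List ℕ) : Set (ℕ → ℕ) := {p | IsPre a p}

section scheme

variable {X Y : Type*}

/-- `fruit_p(V) = ⋂_n V_{p↾n}`. -/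
def fruit (V : List ℕ → Set X) (p : ℕ → ℕ) : Set X := ⋂ n, V (pre p n)

/-- `flesh(V) = ⋃_a V_a`. -/
def flesh (V : List ℕ → Set X) : Set X := ⋃ a, V a

/-- The Souslin scheme `V` covers the set `A`. -/
def Covers (V : List ℕ → Set X) (A : Set X) : Prop :=
  V [] = A ∧ ∀ a, V a = ⋃ n, V (a ++ [n])

/-- The Souslin scheme `V` partitions the set `A`. -/
def Partitions (V : List ℕ → Set X) (A : Set X) : Prop :=
  Covers V A ∧ ∀ a, ∀ n m : ℕ, n ≠ m → V (a ++ [n]) ∩ V (a ++ [m]) = ∅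

/-- `V` is complete: every fruit is nonempty. -/
def CompleteScheme (V : List ℕ → Set X) : Prop := ∀ q : ℕ → ℕ, (fruit V q).Nonempty

/-- `V` has strict branches: every fruit is a singleton. -/
def StrictBranches (V : List ℕ → Set X) : Prop := ∀ q : ℕ → ℕ, ∃ x, fruit V q = {x}

/-- `V` is regular: `V_{a⌢n} ⊆ V_a`. -/
def RegularScheme (V : List ℕ → Set X) : Prop := ∀ a n, V (a ++ [n]) ⊆ V a

/-- `V` has nonempty leaves. -/
def NonemptyLeaves (V : List ℕ → Set X) : Prop := ∀ a, (V a).Nonempty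

/-- `V` is an open Souslin scheme with respect to the topology `t`. -/
def OpenScheme (t : TopologicalSpace X) (V : List ℕ → Set X) : Prop := ∀ a, t.IsOpen (V a)

/-- `V` is semi-open with respect to the topology `t`: `V_a ⊆ Cl_t(Int_t(V_a))`. -/
def SemiOpenScheme (t : TopologicalSpace X) (V : List ℕ → Set X) : Prop :=
  ∀ a, V a ⊆ @closure _ t (@interior _ t (V a))

/-- `Ṽ^k_b = ⋃_{j ≥ k} V_{b⌢j}`. -/
def shootSet (V : List ℕ → Set X) (b : List ℕ) (k : ℕ) : Set X :=
  ⋃ j, ⋃ (_ : k ≤ j), V (b ++ [j])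

/-- `shoot_b(V) = {Ṽ^k_b : k ∈ ω}`. -/
def shoot (V : List ℕ → Set X) (b : List ℕ) : Set (Set X) := {G | ∃ k, G = shootSet V b k}

/-- `γ → U`: some member of the family `γ` is contained in `U`. -/
def Engulfs (γ : Set (Set X)) (U : Set X) : Prop := ∃ G ∈ γ, G ⊆ U

/-- `p →_V U`: there is an infinite `L ⊆ ω` with `shoot_{p↾n}(V) → U` for all `n ∈ L`. -/
def ArrowSeq (V : List ℕ → Set X) (p : ℕ → ℕ) (U : Set X) : Prop :=
  ∃ L : Set ℕ, L.Infinite ∧ ∀ n ∈ L, Engulfs (shoot V (pre p n)) U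

/-- `p →_{V,t} x`: `p →_V U` for every `t`-open `U` containing `x`. -/
def ArrowPt (t : TopologicalSpace X) (V : List ℕ → Set X) (p : ℕ → ℕ) (x : X) : Prop :=
  ∀ U : Set X, t.IsOpen U → x ∈ U → ArrowSeq V p U

/-- `V` is a Lusin π-base for `(X, t)`. -/
def LusinPiBase (t : TopologicalSpace X) (V : List ℕ → Set X) : Prop :=
  OpenScheme t V ∧ Partitions V Set.univ ∧ StrictBranches V ∧
    ∀ x : X, ∀ U : Set X, t.IsOpen U → x ∈ U →
      ∃ a : List ℕ, ∃ n : ℕ, x ∈ V a ∧ shootSet V a n ⊆ U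

/-- `V` is an α-scheme for `(X, t)`. -/
def AlphaScheme (t : TopologicalSpace X) (V : List ℕ → Set X) : Prop :=
  OpenScheme t V ∧ CompleteScheme V ∧ Covers V Set.univ ∧
    (∀ a : List ℕ, ∀ x ∈ V a, ∃ p : ℕ → ℕ, IsPre a p ∧ x ∈ fruit V p ∧ ArrowPt t V p x) ∧
    (∀ p : ℕ → ℕ, ∃ x ∈ fruit V p, ArrowPt t V p x)

/-- `V` is a ramose α-scheme for `(X, t)`. -/
def RamoseAlphaScheme (t : TopologicalSpace X) (V : List ℕ → Set X) : Prop :=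
  AlphaScheme t V ∧ ∀ a : List ℕ, ∀ x ∈ V a,
    Cardinal.mk {p : ℕ → ℕ // IsPre a p ∧ x ∈ fruit V p ∧ ArrowPt t V p x} = Cardinal.continuum

/-- `γ` is a π-base for `(X, t)`. -/
def PiBase (t : TopologicalSpace X) (γ : Set (Set X)) : Prop :=
  (∀ G ∈ γ, G.Nonempty ∧ t.IsOpen G) ∧
    ∀ U : Set X, t.IsOpen U → U.Nonempty → ∃ G ∈ γ, G ⊆ U

/-- `γ` is a π-net for the subspace `A` of `(X, t)`. -/
def PiNetFor (t : TopologicalSpace X) (γ : Set (Set X)) (A : Set X) : Prop :=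
  (∀ G ∈ γ, G.Nonempty) ∧
    ∀ U : Set X, t.IsOpen U → (U ∩ A).Nonempty → ∃ G ∈ γ, G ⊆ U ∩ A

/-- `V` is a π-base Souslin scheme on `(X, t)`:
an open scheme such that `{V_b : a ⊑ b}` is a π-net for the subspace `V_a`, for each `a`. -/
def PiBaseScheme (t : TopologicalSpace X) (V : List ℕ → Set X) : Prop :=
  OpenScheme t V ∧ ∀ a, PiNetFor t {S | ∃ b, a <+: b ∧ S = V b} (V a)

/-- `(X, t)` is a π-space. -/
def PiSpace (t : TopologicalSpace X) : Prop :=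
  ∃ V : List ℕ → Set X, OpenScheme t V ∧ Partitions V Set.univ ∧ StrictBranches V ∧
    PiBase t {S | ∃ a, S = V a}

/-- `(X, t)` is zero-dimensional: it has a base consisting of clopen sets. -/
def ZeroDimT (t : TopologicalSpace X) : Prop :=
  ∀ U : Set X, t.IsOpen U → ∀ x ∈ U, ∃ C : Set X, t.IsOpen C ∧ @IsClosed _ t C ∧ x ∈ C ∧ C ⊆ U

/-- `branches_V(x) = {q ∈ ω^ω : x ∈ fruit_q(V)}`. -/
def branches (V : List ℕ → Set X) (x : X) : Set (ℕ → ℕ) := {q | x ∈ fruit V q}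

/-- `f` is a selector on `V`: a surjection of `ω^ω` onto `flesh(V)` such that each fiber
`f⁻¹(x)` is a dense subset of the subspace `branches_V(x)` of the Baire space. -/
def IsSelector (V : List ℕ → Set X) (f : (ℕ → ℕ) → X) : Prop :=
  (∀ p, f p ∈ flesh V) ∧ (∀ x ∈ flesh V, ∃ p, f p = x) ∧
    ∀ x ∈ flesh V, f ⁻¹' {x} ⊆ branches V x ∧ branches V x ⊆ closure (f ⁻¹' {x})

/-- The topology `σ_{t,f}` on `ω^ω` generated by the subbase
`{f⁻¹[U] : U ∈ t} ∪ {S_a : a ∈ ω^{<ω}}`. -/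
def sigmaTop (t : TopologicalSpace X) (f : (ℕ → ℕ) → X) : TopologicalSpace (ℕ → ℕ) :=
  TopologicalSpace.generateFrom
    ({S | ∃ U : Set X, t.IsOpen U ∧ S = f ⁻¹' U} ∪ {S | ∃ a : List ℕ, S = stdS a})

end scheme

/-- `(ω^ω, t)` is a standard π-space: the family `τ_N \ {∅}` of nonempty open sets of the
Baire space is a π-base for `(ω^ω, t)`. -/
def StandardPiSpace (t : TopologicalSpace (ℕ → ℕ)) : Prop :=
  (∀ U : Set (ℕ → ℕ), IsOpen U → U.Nonempty → t.IsOpen U) ∧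
    ∀ U : Set (ℕ → ℕ), t.IsOpen U → U.Nonempty → ∃ G : Set (ℕ → ℕ), IsOpen G ∧ G.Nonempty ∧ G ⊆ U

namespace S13

abbrev N := ℕ → ℕ

@[simp] lemma pre_length (p : N) (n : ℕ) : (pre p n).length = n := List.length_ofFn

lemma pre_getElem (p : N) (n i : ℕ) (h : i < (pre p n).length) : (pre p n)[i] = p i := by
  simp [pre]

lemma isPre_iff {a : List ℕ} {p : N} :
    IsPre a p ↔ ∀ i (h : i < a.length), a[i] = p i := by
  constructor
  · intro h i hi
    rw [List.getElem_of_eq h, pre_getElem]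
  · intro h
    apply List.ext_getElem
    · simp
    · intro i h1 h2
      rw [pre_getElem]; exact h i h1

lemma isPre_pre (p : N) (n : ℕ) : IsPre (pre p n) p := by
  rw [isPre_iff]; intro i hi; rw [pre_getElem]

lemma mem_stdS {a : List ℕ} {p : N} : p ∈ stdS a ↔ ∀ i (h : i < a.length), a[i] = p i :=
  isPre_iff

lemma mem_stdS_pre (p : N) (n : ℕ) : p ∈ stdS (pre p n) := isPre_pre p n

lemma pre_prefix (p : N) {m n : ℕ} (h : m ≤ n) : pre p m <+: pre p n := by
  rw [List.prefix_iff_eq_take]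
  refine List.ext_getElem (by simp [h]) fun i h1 h2 => ?_
  rw [List.getElem_take, pre_getElem, pre_getElem]

lemma isPre_mono {a b : List ℕ} {p : N} (hab : a <+: b) (h : IsPre b p) : IsPre a p := by
  rw [isPre_iff] at h ⊢
  intro i hi
  exact (hab.getElem hi).trans (h i (lt_of_lt_of_le hi hab.length_le))

lemma stdS_mono {a b : List ℕ} (hab : a <+: b) : stdS b ⊆ stdS a :=
  fun _ h => isPre_mono hab h

/-- extend a list to a function -/
def extFun (a : List ℕ) (p : N) : N := fun i => if h : i < a.length then a[i] else p (i - a.length)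

lemma extFun_mem_stdS (a : List ℕ) (p : N) : extFun a p ∈ stdS a := by
  rw [mem_stdS]; intro i hi; simp [extFun, hi]

lemma stdS_nonempty (a : List ℕ) : (stdS a).Nonempty := ⟨extFun a (fun _ => 0), extFun_mem_stdS a _⟩

lemma stdS_eq_cylinder (p : N) (n : ℕ) : stdS (pre p n) = PiNat.cylinder p n := by
  ext y
  rw [mem_stdS, PiNat.mem_cylinder_iff]
  constructor
  · intro h i hi
    have := h i (by simpa using hi)
    rw [pre_getElem] at this
    exact this.symm
  · intro h i hi
    rw [pre_getElem]
    exact (h i (by simpa using hi)).symm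

lemma stdS_eq_iInter (a : List ℕ) :
    stdS a = ⋂ i ∈ Finset.range a.length, (fun y : N => y i) ⁻¹' {a.getD i 0} := by
  ext y
  simp only [mem_stdS, Set.mem_iInter, Set.mem_preimage, Set.mem_singleton_iff, Finset.mem_range]
  constructor
  · intro h i hi
    rw [List.getD_eq_getElem _ _ hi]
    exact (h i hi).symm
  · intro h i hi
    rw [← List.getD_eq_getElem _ _ hi] at *
    exact (h i hi).symm

lemma isOpen_stdS (a : List ℕ) : IsOpen (stdS a) := by
  rw [stdS_eq_iInter]
  apply isOpen_biInter_finset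
  intro i _
  exact IsOpen.preimage (continuous_apply i) (isOpen_discrete _)

lemma isClosed_stdS (a : List ℕ) : IsClosed (stdS a) := by
  rw [stdS_eq_iInter]
  apply isClosed_biInter
  intro i _
  exact IsClosed.preimage (continuous_apply i) isClosed_singleton

/-- basic nbhd inside an open set -/
lemma exists_cylinder_subset {U : Set N} (hU : IsOpen U) {q : N} (hq : q ∈ U) :
    ∃ n, stdS (pre q n) ⊆ U := by
  have hb := PiNat.isTopologicalBasis_cylinders (fun _ : ℕ => ℕ)
  rw [hb.isOpen_iff] at hU
  obtain ⟨t, ⟨z, n, rfl⟩, hqt, htU⟩ := hU q hq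
  refine ⟨n, ?_⟩
  have hsub : stdS (pre q n) ⊆ PiNat.cylinder z n := by
    intro y hy
    rw [mem_stdS] at hy
    intro i hi
    have h1 := hy i (by simpa using hi)
    rw [pre_getElem] at h1
    rw [← h1]
    exact hqt i hi
  exact hsub.trans htU

lemma exists_cylinder_subset' {U : Set N} (hU : IsOpen U) {q : N} (hq : q ∈ U) (n₀ : ℕ) :
    ∃ n, n₀ ≤ n ∧ stdS (pre q n) ⊆ U := by
  obtain ⟨n, hn⟩ := exists_cylinder_subset hU hq
  exact ⟨max n n₀, le_max_right _ _,
    (stdS_mono (pre_prefix q (le_max_left _ _))).trans hn⟩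

/-- diagonal: escape any countable set inside any cylinder -/
lemma exists_mem_stdS_not_mem {A : Set N} (hA : A.Countable) (a : List ℕ) :
    ∃ z ∈ stdS a, z ∉ A := by
  rcases A.eq_empty_or_nonempty with h | h
  · exact ⟨extFun a (fun _ => 0), extFun_mem_stdS a _, by simp [h]⟩
  obtain ⟨g, hg⟩ := Set.Countable.exists_surjective h hA
  set z : N := extFun a (fun i => (g i : N) (i + a.length) + 1) with hz
  refine ⟨z, extFun_mem_stdS a _, ?_⟩
  intro hzA
  obtain ⟨i, hi⟩ := hg ⟨z, hzA⟩
  have h2 : z (i + a.length) = (g i : N) (i + a.length) + 1 := by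
    simp [hz, extFun]
  rw [show ((g i : N)) = z by rw [hi]] at h2
  omega

/-- a nonempty open set has a point different from any given x -/
lemma exists_ne_of_isOpen {U : Set N} (hU : IsOpen U) (hne : U.Nonempty) (x : N) :
    ∃ z ∈ U, z ≠ x := by
  obtain ⟨q, hq⟩ := hne
  obtain ⟨n, hn⟩ := exists_cylinder_subset hU hq
  obtain ⟨z, hz, hzx⟩ := exists_mem_stdS_not_mem (Set.countable_singleton x) (pre q n)
  exact ⟨z, hn hz, by simpa using hzx⟩



section chainlim

variable {u : ℕ → List ℕ}

lemma chain_mono (hchain : ∀ s, u s <+: u (s+1)) : ∀ {s t}, s ≤ t → u s <+: u t := by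
  intro s t h
  induction t with
  | zero => simpa [Nat.le_zero.mp h]
  | succ t ih =>
    rcases Nat.lt_or_ge s (t+1) with h' | h'
    · exact (ih (Nat.lt_succ_iff.mp h')).trans (hchain t)
    · have : s = t + 1 := le_antisymm h h'
      simp [this]

lemma chain_comparable (hchain : ∀ s, u s <+: u (s+1)) (s t : ℕ) :
    u s <+: u t ∨ u t <+: u s := by
  rcases Nat.le_total s t with h | h
  · exact Or.inl (chain_mono hchain h)
  · exact Or.inr (chain_mono hchain h)

lemma chain_limit (hchain : ∀ s, u s <+: u (s+1))
    (hlen : ∀ n, ∃ s, n < (u s).length) :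
    ∃ f : N, ∀ s, IsPre (u s) f := by
  classical
  refine ⟨fun n => (u (Nat.find (hlen n))).getD n 0, fun s => ?_⟩
  rw [isPre_iff]
  intro i hi
  have hspec := Nat.find_spec (hlen i)
  set t := Nat.find (hlen i)
  have hcomp := chain_comparable hchain s t
  have : (u s)[i] = (u t)[i]'(hspec) := by
    rcases hcomp with h | h
    · exact h.getElem hi
    · exact (h.getElem hspec).symm
  rw [this, List.getD_eq_getElem _ _ hspec]

lemma limit_unique {f g : N} (hlen : ∀ n, ∃ s, n < (u s).length)
    (hf : ∀ s, IsPre (u s) f) (hg : ∀ s, IsPre (u s) g) : f = g := by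
  funext n
  obtain ⟨s, hs⟩ := hlen n
  have h1 := (isPre_iff.mp (hf s)) n hs
  have h2 := (isPre_iff.mp (hg s)) n hs
  rw [← h1, h2]

end chainlim

section scheme
variable {X : Type*} {V : List ℕ → Set X}

lemma regular_mono (hV : RegularScheme V) {a b : List ℕ} (hab : a <+: b) : V b ⊆ V a := by
  obtain ⟨t, rfl⟩ := hab
  induction t using List.reverseRecOn with
  | nil => simp
  | append_singleton t j ih =>
    rw [← List.append_assoc]
    exact (hV (a ++ t) j).trans ih

lemma child_subset_shootSet (b : List ℕ) (k : ℕ) : V (b ++ [k]) ⊆ shootSet V b k := by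
  intro y hy
  exact Set.mem_iUnion.mpr ⟨k, Set.mem_iUnion.mpr ⟨le_refl k, hy⟩⟩

lemma shootSet_antitone (b : List ℕ) {k k' : ℕ} (h : k ≤ k') :
    shootSet V b k' ⊆ shootSet V b k := by
  intro y hy
  obtain ⟨j, hj, hyj⟩ := by simpa [shootSet] using hy
  exact Set.mem_iUnion.mpr ⟨j, Set.mem_iUnion.mpr ⟨h.trans hj, hyj⟩⟩

lemma shootSet_subset (hV : RegularScheme V) (b : List ℕ) (k : ℕ) :
    shootSet V b k ⊆ V b := by
  intro y hy
  obtain ⟨j, _, hyj⟩ := by simpa [shootSet] using hy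
  exact hV b j hyj

end scheme
end S13


section play

/-- Certificate for a scheme `W` and point `x`. -/
structure Cert (W : List ℕ → Set (ℕ → ℕ)) (x : ℕ → ℕ) : Type where
  p : ℕ → ℕ
  A : Set (ℕ → ℕ)
  hcnt : A.Countable
  hxA : x ∉ A
  hclA : closure A ⊆ A ∪ {x}
  hwit : ∀ n k, ∃ z ∈ shootSet W (pre p n) k, z ∈ A
  hfruit : fruit W p = {x}
  hV : ∀ V : List ℕ → Set (ℕ → ℕ), RegularScheme V →
      SemiOpenScheme inferInstance V → (∀ a, interior (V a) = W a) → fruit V p = {x}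

namespace S13

variable {W : List ℕ → Set N}

/-- the three hypotheses on W -/
def Valid (W : List ℕ → Set N) : Prop :=
  RegularScheme W ∧ PiBaseScheme (inferInstance : TopologicalSpace N) W ∧ NonemptyLeaves W

lemma Valid.open' (h : Valid W) (a : List ℕ) : IsOpen (W a) := h.2.1.1 a

lemma Valid.nonempty (h : Valid W) (a : List ℕ) : (W a).Nonempty := h.2.2 a

lemma Valid.reg (h : Valid W) : RegularScheme W := h.1

lemma step_exists (h : Valid W) (a c : List ℕ) (hinv : stdS c ⊆ W a) :
    ∃ ad : List ℕ × List ℕ, a <+: ad.1 ∧ W ad.1 ⊆ stdS c ∧ stdS ad.2 ⊆ W ad.1 ∧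
      c <+: ad.2 ∧ c.length < ad.2.length := by
  obtain ⟨hne, hdense⟩ := h.2.1.2 a
  obtain ⟨G, ⟨b, hab, rfl⟩, hGsub⟩ := hdense (stdS c) (isOpen_stdS c)
    (by
      obtain ⟨y, hy⟩ := stdS_nonempty c
      exact ⟨y, hy, hinv hy⟩)
  have hWb : W b ⊆ stdS c := hGsub.trans Set.inter_subset_left
  obtain ⟨y, hy⟩ := h.nonempty b
  obtain ⟨n, hn1, hn2⟩ := exists_cylinder_subset' (h.open' b) hy (c.length + 1)
  refine ⟨(b, pre y n), hab, hWb, hn2, ?_, ?_⟩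
  · have hcy : IsPre c y := hWb hy
    rw [hcy]
    exact pre_prefix y (by omega)
  · rw [pre_length]; omega

end S13

end play

namespace S13

def StepP (W : List ℕ → Set N) (ac ad : List ℕ × List ℕ) : Prop :=
  ac.1 <+: ad.1 ∧ W ad.1 ⊆ stdS ac.2 ∧ stdS ad.2 ⊆ W ad.1 ∧
    ac.2 <+: ad.2 ∧ ac.2.length < ad.2.length

open scoped Classical in
noncomputable def stepF (W : List ℕ → Set N) (ac : List ℕ × List ℕ) : List ℕ × List ℕ :=
  if h : ∃ ad, StepP W ac ad then h.choose else ([], [])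

lemma stepF_spec {W : List ℕ → Set N} (hW : Valid W) (ac : List ℕ × List ℕ)
    (hinv : stdS ac.2 ⊆ W ac.1) : StepP W ac (stepF W ac) := by
  have h : ∃ ad, StepP W ac ad := step_exists hW ac.1 ac.2 hinv
  classical
  rw [stepF]
  rw [dif_pos h]
  exact h.choose_spec

open scoped Classical in
noncomputable def initC (W : List ℕ → Set N) : List ℕ :=
  if h : ∃ c, stdS c ⊆ W [] then h.choose else []

lemma initC_spec {W : List ℕ → Set N} (hW : Valid W) : stdS (initC W) ⊆ W [] := by
  obtain ⟨y, hy⟩ := hW.nonempty []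
  obtain ⟨n, hn⟩ := exists_cylinder_subset (hW.open' []) hy
  have h : ∃ c, stdS c ⊆ W [] := ⟨pre y n, hn⟩
  classical
  rw [initC]
  rw [dif_pos h]
  exact h.choose_spec

noncomputable def playSt (W : List ℕ → Set N) (ε : N) : ℕ → List ℕ × List ℕ
  | 0 => ([], initC W)
  | s + 1 => ((stepF W (playSt W ε s)).1, (stepF W (playSt W ε s)).2 ++ [ε s])

section invariants

variable {W : List ℕ → Set N} (hW : Valid W) (ε : N)
include hW

lemma inv1 : ∀ s, stdS (playSt W ε s).2 ⊆ W (playSt W ε s).1 := by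
  intro s
  induction s with
  | zero => exact initC_spec hW
  | succ s ih =>
    have hs := stepF_spec hW (playSt W ε s) ih
    show stdS ((stepF W (playSt W ε s)).2 ++ [ε s]) ⊆ _
    exact (stdS_mono ⟨[ε s], rfl⟩).trans hs.2.2.1

lemma inv_step (s : ℕ) : StepP W (playSt W ε s) (stepF W (playSt W ε s)) :=
  stepF_spec hW _ (inv1 hW ε s)

lemma inv2 (s : ℕ) : (playSt W ε s).1 <+: (playSt W ε (s+1)).1 :=
  (inv_step hW ε s).1

lemma inv3 (s : ℕ) : W (playSt W ε (s+1)).1 ⊆ stdS (playSt W ε s).2 :=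
  (inv_step hW ε s).2.1

lemma inv4 (s : ℕ) : (playSt W ε s).2 <+: (playSt W ε (s+1)).2 :=
  ((inv_step hW ε s).2.2.2.1).trans ⟨[ε s], rfl⟩

lemma inv5 (s : ℕ) : (playSt W ε s).2.length < (playSt W ε (s+1)).2.length := by
  have h := (inv_step hW ε s).2.2.2.2
  show _ < ((stepF W (playSt W ε s)).2 ++ [ε s]).length
  rw [List.length_append]
  simpa using Nat.lt_succ_of_lt h

lemma clen0 (s : ℕ) : s ≤ (playSt W ε s).2.length := by
  induction s with
  | zero => exact Nat.zero_le _
  | succ s ih => exact Nat.lt_of_le_of_lt ih (inv5 hW ε s)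

lemma clen (n : ℕ) : ∃ s, n < (playSt W ε s).2.length :=
  ⟨n + 1, Nat.lt_of_lt_of_le (Nat.lt_succ_self n) (clen0 hW ε (n+1))⟩

noncomputable def xF : N := (chain_limit (u := fun s => (playSt W ε s).2)
  (inv4 hW ε) (clen hW ε)).choose

lemma xF_spec : ∀ s, IsPre (playSt W ε s).2 (xF hW ε) :=
  (chain_limit (inv4 hW ε) (clen hW ε)).choose_spec

lemma x_mem_stdS (s : ℕ) : xF hW ε ∈ stdS (playSt W ε s).2 := xF_spec hW ε s

lemma alen (n : ℕ) : ∃ s, n < (playSt W ε s).1.length := by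
  by_contra hcon
  push_neg at hcon
  have hmono : ∀ {s t}, s ≤ t → (playSt W ε s).1 <+: (playSt W ε t).1 :=
    fun {s t} h => chain_mono (inv2 hW ε) h
  have hP : ∃ m, ∀ s, ((playSt W ε s).1).length ≤ m := ⟨n, hcon⟩
  classical
  set L := Nat.find hP with hLdef
  have hLspec : ∀ s, ((playSt W ε s).1).length ≤ L := Nat.find_spec hP
  have hs₀ : ∃ s₀, ((playSt W ε s₀).1).length = L := by
    rcases Nat.eq_zero_or_pos L with h0 | hpos
    · exact ⟨0, le_antisymm (hLspec 0) (by omega)⟩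
    · have hmin := Nat.find_min hP (m := L - 1) (by omega)
      push_neg at hmin
      obtain ⟨s₀, hs₀⟩ := hmin
      exact ⟨s₀, le_antisymm (hLspec s₀) (by omega)⟩
  obtain ⟨s₀, hs₀len⟩ := hs₀
  have hconst : ∀ s, s₀ ≤ s → (playSt W ε s).1 = (playSt W ε s₀).1 := by
    intro s hs
    have h1 := hmono hs
    refine (h1.eq_of_length ?_).symm
    have h2 := h1.length_le
    have h3 := hLspec s
    omega
  set A := (playSt W ε s₀).1 with hA
  have hWA : ∀ s, s₀ ≤ s → W A ⊆ stdS (playSt W ε s).2 := by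
    intro s hs
    have h1 : (playSt W ε (s+1)).1 = A := hconst (s+1) (by omega)
    rw [← h1]
    exact inv3 hW ε s
  obtain ⟨z₀, hz₀⟩ := hW.nonempty A
  obtain ⟨z₁, hz₁, hz10⟩ := exists_ne_of_isOpen (hW.open' A) ⟨z₀, hz₀⟩ z₀
  apply hz10
  funext m
  set s := max s₀ (m+1) with hsdef
  have hm : m < (playSt W ε s).2.length :=
    Nat.lt_of_lt_of_le (Nat.lt_of_lt_of_le (Nat.lt_succ_self m)
      ((clen0 hW ε (m+1)).trans ?_)) le_rfl
  · have e₀ := isPre_iff.mp (hWA s (le_max_left _ _) hz₀) m hm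
    have e₁ := isPre_iff.mp (hWA s (le_max_left _ _) hz₁) m hm
    rw [← e₀, e₁]
  · -- (m+1) ≤ s so len mono
    have : (playSt W ε (m+1)).2.length ≤ (playSt W ε s).2.length :=
      (chain_mono (inv4 hW ε) (le_max_right _ _)).length_le
    exact this

noncomputable def pF : N := (chain_limit (u := fun s => (playSt W ε s).1)
  (inv2 hW ε) (alen hW ε)).choose

lemma pF_spec : ∀ s, IsPre (playSt W ε s).1 (pF hW ε) :=
  (chain_limit (inv2 hW ε) (alen hW ε)).choose_spec

end invariants
end S13

namespace S13
section derived

variable {W : List ℕ → Set N} (hW : Valid W) (ε : N)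
include hW

lemma pre_p_eq (s : ℕ) : pre (pF hW ε) ((playSt W ε s).1).length = (playSt W ε s).1 :=
  (pF_spec hW ε s).symm

lemma pre_c_eq (s : ℕ) : pre (xF hW ε) ((playSt W ε s).2).length = (playSt W ε s).2 :=
  (xF_spec hW ε s).symm

lemma node_sub (n s : ℕ) (h : n ≤ ((playSt W ε s).1).length) :
    W (playSt W ε s).1 ⊆ W (pre (pF hW ε) n) := by
  apply regular_mono hW.reg
  rw [← pre_p_eq hW ε s]
  exact pre_prefix _ h

lemma x_mem_node (n : ℕ) : xF hW ε ∈ W (pre (pF hW ε) n) := by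
  obtain ⟨s, hs⟩ := alen hW ε n
  exact node_sub hW ε n s (le_of_lt hs) (inv1 hW ε s (x_mem_stdS hW ε s))

lemma conf (s n : ℕ) (h : ((playSt W ε (s+1)).1).length ≤ n) :
    W (pre (pF hW ε) n) ⊆ stdS (playSt W ε s).2 := by
  refine Set.Subset.trans ?_ (inv3 hW ε s)
  apply regular_mono hW.reg
  rw [← pre_p_eq hW ε (s+1)]
  exact pre_prefix _ h

lemma eq_x_of_forall_stdS {y : N} (hy : ∀ s, y ∈ stdS (playSt W ε s).2) : y = xF hW ε :=
  limit_unique (clen hW ε) (fun s => hy s) (xF_spec hW ε)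

lemma fruit_eq : fruit W (pF hW ε) = {xF hW ε} := by
  apply Set.eq_singleton_iff_unique_mem.mpr
  constructor
  · exact Set.mem_iInter.mpr fun n => x_mem_node hW ε n
  · intro y hy
    apply eq_x_of_forall_stdS hW ε
    intro s
    have hmem : y ∈ W (pre (pF hW ε) ((playSt W ε (s+1)).1).length) :=
      Set.mem_iInter.mp hy _
    rw [pre_p_eq hW ε (s+1)] at hmem
    exact inv3 hW ε s hmem

lemma fruit_V (V : List ℕ → Set N) (hsemi : SemiOpenScheme inferInstance V)
    (hint : ∀ a, interior (V a) = W a) : fruit V (pF hW ε) = {xF hW ε} := by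
  apply Set.eq_singleton_iff_unique_mem.mpr
  constructor
  · refine Set.mem_iInter.mpr fun n => ?_
    have := x_mem_node hW ε n
    rw [← hint] at this
    exact interior_subset this
  · intro y hy
    apply eq_x_of_forall_stdS hW ε
    intro s
    have hmem : y ∈ V (pre (pF hW ε) ((playSt W ε (s+1)).1).length) :=
      Set.mem_iInter.mp hy _
    rw [pre_p_eq hW ε (s+1)] at hmem
    have h1 : V (playSt W ε (s+1)).1 ⊆ stdS (playSt W ε s).2 := by
      refine (hsemi _).trans ?_
      rw [hint]
      rw [← IsClosed.closure_eq (isClosed_stdS (playSt W ε s).2)]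
      exact closure_mono (inv3 hW ε s)
    exact h1 hmem

end derived
end S13

namespace S13

/-- closure of a sequence of points converging to a target `y` -/
lemma node_closure_target {y : N} {z : ℕ → N} (hz : ∀ k, z k ∈ stdS (pre y k)) :
    closure (Set.range z ∪ {y}) ⊆ Set.range z ∪ {y} := by
  intro w hw
  by_contra hnw
  have hwy : w ≠ y := by
    intro h; exact hnw (by simp [h])
  have hdiff : ∃ i, w i ≠ y i := by
    by_contra h'; push_neg at h'
    exact hwy (funext h')
  obtain ⟨i, hi⟩ := hdiff
  have hsub : Set.range z ∪ {y} ⊆ (z '' {k | k < i + 1}) ∪ stdS (pre y (i + 1)) := by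
    rintro v (⟨k, rfl⟩ | hv)
    · rcases Nat.lt_or_ge k (i+1) with h | h
      · exact Or.inl ⟨k, h, rfl⟩
      · exact Or.inr (stdS_mono (pre_prefix y (by omega)) (hz k))
    · simp only [Set.mem_singleton_iff] at hv
      subst hv
      exact Or.inr (mem_stdS_pre _ _)
  have hcl : IsClosed ((z '' {k | k < i + 1}) ∪ stdS (pre y (i + 1))) := by
    apply IsClosed.union
    · apply Set.Finite.isClosed
      apply Set.Finite.image
      exact Set.finite_Iio (i+1)
    · exact isClosed_stdS _
  have hw2 := (hcl.closure_subset_iff.mpr hsub) hw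
  rcases hw2 with h | h
  · obtain ⟨k, _, hk⟩ := h
    exact hnw (Or.inl ⟨k, hk⟩)
  · rw [mem_stdS] at h
    have := h i (by simp)
    rw [pre_getElem] at this
    exact hi this.symm

/-- closure of a sequence of points in a decreasing sequence of sets -/
lemma node_closure_notarget {x : N} {T : ℕ → Set N}
    (hanti : ∀ {k k'}, k ≤ k' → T k' ⊆ T k) {z : ℕ → N} (hz : ∀ k, z k ∈ T k)
    (hL : (⋂ k, closure (T k)) ⊆ {x}) :
    closure (Set.range z) ⊆ Set.range z ∪ {x} := by
  intro w hw
  by_contra hnw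
  have key : ∀ K, w ∈ closure (T K) := by
    intro K
    have hsub : Set.range z ⊆ (z '' {k | k < K}) ∪ T K := by
      rintro v ⟨k, rfl⟩
      rcases Nat.lt_or_ge k K with h | h
      · exact Or.inl ⟨k, h, rfl⟩
      · exact Or.inr (hanti h (hz k))
    have h2 := (closure_mono hsub) hw
    rw [closure_union] at h2
    rcases h2 with h | h
    · exfalso
      have hfin : ((z '' {k | k < K})).Finite := Set.Finite.image _ (Set.finite_Iio K)
      rw [hfin.isClosed.closure_eq] at h
      obtain ⟨k, _, hk⟩ := h
      exact (hnw (Or.inl ⟨k, hk⟩)).elim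
    · exact h
  have : w ∈ ⋂ k, closure (T k) := Set.mem_iInter.mpr key
  have := hL this
  simp only [Set.mem_singleton_iff] at this
  exact hnw (Or.inr (by simp [this]))

end S13

namespace S13
section cert

variable {W : List ℕ → Set N} (hW : Valid W) (ε : N)
include hW

lemma cert_exists : Nonempty (Cert W (xF hW ε)) := by
  classical
  set x := xF hW ε with hxdef
  set p := pF hW ε with hpdef
  set T : ℕ → ℕ → Set N := fun n k => shootSet W (pre p n) k with hTdef
  have Topen : ∀ n k, IsOpen (T n k) := by
    intro n k
    apply isOpen_iUnion
    intro j
    apply isOpen_iUnion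
    intro _
    exact hW.open' _
  have Tne : ∀ n k, (T n k).Nonempty := by
    intro n k
    obtain ⟨y, hy⟩ := hW.nonempty (pre p n ++ [k])
    exact ⟨y, child_subset_shootSet _ _ hy⟩
  have Tanti : ∀ n, ∀ {k k'}, k ≤ k' → T n k' ⊆ T n k := by
    intro n k k' h
    exact shootSet_antitone _ h
  have Tsub : ∀ n k, T n k ⊆ W (pre p n) := fun n k => shootSet_subset hW.reg _ _
  set L : ℕ → Set N := fun n => ⋂ k, closure (T n k) with hLdef
  -- targets
  have hy : ∀ n, ∃ y : N, (y ≠ x → y ∈ L n \ {x}) ∧ ((L n \ {x}).Nonempty → y ≠ x) := by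
    intro n
    by_cases h : (L n \ {x}).Nonempty
    · obtain ⟨y, hy⟩ := h
      refine ⟨y, fun _ => hy, fun _ => ?_⟩
      exact fun hc => (hy.2 (by simp [hc]))
    · exact ⟨x, fun hc => absurd rfl hc, fun hc => absurd hc h⟩
  choose yT hyT1 hyT2 using hy
  -- witnesses
  have hSne : ∀ n k, ∃ z, z ∈ T n k ∧ z ≠ x ∧ (yT n ≠ x → z ∈ stdS (pre (yT n) k)) := by
    intro n k
    by_cases hcase : yT n = x
    · obtain ⟨z, hz, hzx⟩ := exists_ne_of_isOpen (Topen n k) (Tne n k) x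
      exact ⟨z, hz, hzx, fun h => absurd hcase h⟩
    · have hyL : yT n ∈ L n \ {x} := hyT1 n hcase
      have hycl : yT n ∈ closure (T n k) := Set.mem_iInter.mp hyL.1 k
      have hO : (stdS (pre (yT n) k) ∩ T n k).Nonempty := by
        rw [mem_closure_iff] at hycl
        exact hycl _ (isOpen_stdS _) (mem_stdS_pre _ _)
      obtain ⟨z, hz, hzx⟩ := exists_ne_of_isOpen
        ((isOpen_stdS (pre (yT n) k)).inter (Topen n k)) hO x
      exact ⟨z, hz.2, hzx, fun _ => hz.1⟩
  choose zW hz1 hz2 hz3 using hSne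
  set An : ℕ → Set N := fun n => Set.range (zW n) ∪ ({yT n} \ {x}) with hAndef
  set A : Set N := ⋃ n, An n with hAdef
  have hcnt : A.Countable := by
    apply Set.countable_iUnion
    intro n
    exact (Set.countable_range _).union ((Set.countable_singleton _).mono Set.diff_subset)
  have hxA : x ∉ A := by
    intro hx
    obtain ⟨n, hn⟩ := Set.mem_iUnion.mp hx
    rcases hn with ⟨k, hk⟩ | hv
    · exact hz2 n k hk
    · exact hv.2 rfl
  -- per-node closure
  have hAn_cl : ∀ n, closure (An n) ⊆ An n ∪ {x} := by
    intro n
    by_cases hcase : yT n = x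
    · have h0 : {yT n} \ {x} = (∅ : Set N) := by simp [hcase]
      have hAn' : An n = Set.range (zW n) := by rw [hAndef]; simp [h0]
      rw [hAn']
      have hL' : L n ⊆ {x} := by
        by_contra hc
        obtain ⟨v, hv1, hv2⟩ := Set.not_subset.mp hc
        have : (L n \ {x}).Nonempty := ⟨v, hv1, hv2⟩
        exact (hyT2 n this) hcase
      exact node_closure_notarget (fun {k k'} h => Tanti n h) (hz1 n) hL'
    · have hxy : x ∉ ({yT n} : Set N) := by
        simp only [Set.mem_singleton_iff]
        exact fun h => hcase h.symm
      have hAn' : An n = Set.range (zW n) ∪ {yT n} := by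
        show Set.range (zW n) ∪ ({yT n} \ {x}) = _
        rw [Set.diff_singleton_eq_self hxy]
      rw [hAn']
      refine (node_closure_target (fun k => hz3 n k hcase)).trans ?_
      exact Set.subset_union_left
  -- global closure
  have hclA : closure A ⊆ A ∪ {x} := by
    intro w hw
    by_contra hnw
    have hwx : w ≠ x := fun h => hnw (Or.inr (by simp [h]))
    have hwA : w ∉ A := fun h => hnw (Or.inl h)
    have hdiff : ∃ d, w d ≠ x d := by
      by_contra h'; push_neg at h'
      exact hwx (funext h')
    obtain ⟨d, hd⟩ := hdiff
    set s := d + 1 with hsdef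
    have hds : d < ((playSt W ε s).2).length := by
      have := clen0 hW ε s
      omega
    have hwc : w ∉ stdS (playSt W ε s).2 := by
      intro hmem
      have h1 := isPre_iff.mp hmem d hds
      have h2 := isPre_iff.mp (x_mem_stdS hW ε s) d hds
      rw [h1] at h2
      exact hd h2
    set n₀ := ((playSt W ε (s+1)).1).length with hn₀def
    have htail : ∀ n, n₀ ≤ n → An n ⊆ stdS (playSt W ε s).2 := by
      intro n hn
      have hWsub : W (pre p n) ⊆ stdS (playSt W ε s).2 := conf hW ε s n hn
      rintro v (⟨k, rfl⟩ | hv)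
      · exact hWsub (Tsub n k (hz1 n k))
      · have hvy : v = yT n := hv.1
        have hvx : v ≠ x := hv.2
        subst hvy
        have : yT n ∈ L n := (hyT1 n hvx).1
        have h2 : closure (T n 0) ⊆ stdS (playSt W ε s).2 := by
          rw [← IsClosed.closure_eq (isClosed_stdS (playSt W ε s).2)]
          exact closure_mono ((Tsub n 0).trans hWsub)
        exact h2 (Set.mem_iInter.mp this 0)
    have hsplit : A ⊆ (⋃ n ∈ Set.Iio n₀, An n) ∪ stdS (playSt W ε s).2 := by
      intro v hv
      obtain ⟨n, hn⟩ := Set.mem_iUnion.mp hv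
      rcases Nat.lt_or_ge n n₀ with h | h
      · exact Or.inl (Set.mem_biUnion h hn)
      · exact Or.inr (htail n h hn)
    have hcl2 := (closure_mono hsplit) hw
    rw [closure_union, IsClosed.closure_eq (isClosed_stdS _)] at hcl2
    rcases hcl2 with h | h
    · rw [(Set.finite_Iio n₀).closure_biUnion] at h
      obtain ⟨n, _, hn⟩ := Set.mem_iUnion₂.mp h
      rcases (hAn_cl n) hn with h' | h'
      · exact hwA (Set.mem_iUnion.mpr ⟨n, h'⟩)
      · exact hwx (by simpa using h')
    · exact hwc h
  -- assemble
  refine ⟨⟨p, A, hcnt, hxA, hclA, ?_, ?_, ?_⟩⟩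
  · intro n k
    exact ⟨zW n k, hz1 n k, Set.mem_iUnion.mpr ⟨n, Or.inl ⟨k, rfl⟩⟩⟩
  · exact fruit_eq hW ε
  · intro V _ hsemi hint
    exact fruit_V hW ε V hsemi hint

end cert
end S13

namespace S13
section inj

variable {W : List ℕ → Set N}

lemma play_agree (ε ε' : N) (s : ℕ) (h : ∀ i, i < s → ε i = ε' i) :
    playSt W ε s = playSt W ε' s := by
  induction s with
  | zero => rfl
  | succ s ih =>
    have hs : playSt W ε s = playSt W ε' s := ih (fun i hi => h i (by omega))
    show ((stepF W (playSt W ε s)).1, (stepF W (playSt W ε s)).2 ++ [ε s]) = _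
    rw [hs, h s (by omega)]
    rfl

lemma xF_inj (hW : Valid W) : Function.Injective (fun ε => xF hW ε) := by
  intro ε ε' hx
  by_contra hne
  have hex : ∃ s, ε s ≠ ε' s := by
    by_contra h'; push_neg at h'
    exact hne (funext h')
  classical
  set s := Nat.find hex with hsdef
  have hagree : ∀ i, i < s → ε i = ε' i := by
    intro i hi
    by_contra h'
    exact absurd hi (not_lt.mpr (Nat.find_le h'))
  have hstates : playSt W ε s = playSt W ε' s := play_agree ε ε' s hagree
  set d := (stepF W (playSt W ε s)).2 with hddef
  have hc1 : (playSt W ε (s+1)).2 = d ++ [ε s] := rfl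
  have hc2 : (playSt W ε' (s+1)).2 = d ++ [ε' s] := by
    show (stepF W (playSt W ε' s)).2 ++ [ε' s] = _
    rw [← hstates]
  have hlen : d.length < ((playSt W ε (s+1)).2).length := by
    rw [hc1, List.length_append]; simp
  have hlen' : d.length < ((playSt W ε' (s+1)).2).length := by
    rw [hc2, List.length_append]; simp
  have e1 : ε s = xF hW ε d.length := by
    have := isPre_iff.mp (xF_spec hW ε (s+1)) d.length (by rw [hc1]; simpa using hlen)
    rw [← this]
    rw [List.getElem_of_eq hc1]
    exact (List.getElem_concat_length (l := d) (a := ε s) (i := d.length) rfl _).symm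
  have e2 : ε' s = xF hW ε' d.length := by
    have := isPre_iff.mp (xF_spec hW ε' (s+1)) d.length (by rw [hc2]; simpa using hlen')
    rw [← this]
    rw [List.getElem_of_eq hc2]
    exact (List.getElem_concat_length (l := d) (a := ε' s) (i := d.length) rfl _).symm
  have hspec : ε s ≠ ε' s := Nat.find_spec hex
  apply hspec
  rw [e1, e2]
  simp only at hx
  rw [hx]

lemma play_lemma (hW : Valid W) :
    ∃ f : N → N, Function.Injective f ∧ ∀ ε, Nonempty (Cert W (f ε)) :=
  ⟨fun ε => xF hW ε, xF_inj hW, fun ε => cert_exists hW ε⟩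

end inj
end S13

namespace S13

/-- the `m`-th sibling cylinder along `x` -/
def SIB (x : N) (m : ℕ) : Set N := stdS (pre x m ++ [x m + 1])

lemma SIB_sub (x : N) (m : ℕ) : SIB x m ⊆ stdS (pre x m) :=
  stdS_mono ⟨[x m + 1], rfl⟩

lemma SIB_nonempty (x : N) (m : ℕ) : (SIB x m).Nonempty := stdS_nonempty _

lemma isOpen_SIB (x : N) (m : ℕ) : IsOpen (SIB x m) := isOpen_stdS _

lemma isClosed_SIB (x : N) (m : ℕ) : IsClosed (SIB x m) := isClosed_stdS _

lemma x_not_mem_SIB (x : N) (m : ℕ) : x ∉ SIB x m := by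
  intro h
  rw [SIB, mem_stdS] at h
  have hm : m < (pre x m ++ [x m + 1]).length := by simp
  have := h m hm
  rw [List.getElem_concat_length (by simp) hm] at this
  omega

/-- property of an admissible family of pieces -/
def Pieces (x : N) (P : ℕ → Set N) : Prop :=
  ∀ m, IsClosed (P m) ∧ IsOpen (P m) ∧ (P m).Nonempty ∧ P m ⊆ SIB x m

lemma pieces_open {x : N} {P : ℕ → Set N} (hP : Pieces x P) : IsOpen (⋃ m, P m) :=
  isOpen_iUnion fun m => (hP m).2.1

lemma pieces_nonempty {x : N} {P : ℕ → Set N} (hP : Pieces x P) : (⋃ m, P m).Nonempty := by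
  obtain ⟨q, hq⟩ := (hP 0).2.2.1
  exact ⟨q, Set.mem_iUnion.mpr ⟨0, hq⟩⟩

lemma pieces_closure {x : N} {P : ℕ → Set N} (hP : Pieces x P) :
    closure (⋃ m, P m) = (⋃ m, P m) ∪ {x} := by
  apply Set.Subset.antisymm
  · intro w hw
    by_cases hwx : w = x
    · exact Or.inr (by simp [hwx])
    left
    have hdiff : ∃ d, w d ≠ x d := by
      by_contra h'; push_neg at h'
      exact hwx (funext h')
    obtain ⟨d, hd⟩ := hdiff
    have hwc : w ∉ stdS (pre x (d+1)) := by
      intro hmem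
      have h1 := isPre_iff.mp hmem d (by simp)
      rw [pre_getElem] at h1
      exact hd h1.symm
    have hsplit : (⋃ m, P m) ⊆ (⋃ m ∈ Set.Iic d, P m) ∪ stdS (pre x (d+1)) := by
      intro v hv
      obtain ⟨m, hm⟩ := Set.mem_iUnion.mp hv
      rcases le_or_gt m d with h | h
      · exact Or.inl (Set.mem_biUnion h hm)
      · refine Or.inr (((((hP m).2.2.2).trans (SIB_sub x m)).trans
          (stdS_mono (pre_prefix x h))) hm)
    have h2 := (closure_mono hsplit) hw
    rw [closure_union, IsClosed.closure_eq (isClosed_stdS _),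
      (Set.finite_Iic d).closure_biUnion] at h2
    rcases h2 with h | h
    · obtain ⟨m, _, hm⟩ := Set.mem_iUnion₂.mp h
      rw [IsClosed.closure_eq (hP m).1] at hm
      exact Set.mem_iUnion.mpr ⟨m, hm⟩
    · exact absurd h hwc
  · apply Set.union_subset subset_closure
    intro w hw
    simp only [Set.mem_singleton_iff] at hw
    subst hw
    rw [mem_closure_iff]
    intro O hO hwO
    obtain ⟨n, hn⟩ := exists_cylinder_subset hO hwO
    obtain ⟨q, hq⟩ := (hP n).2.2.1
    exact ⟨q, hn (((hP n).2.2.2.trans (SIB_sub w n)) hq), Set.mem_iUnion.mpr ⟨n, hq⟩⟩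

/-- classic pieces -/
lemma pieces_classic (x : N) : Pieces x (fun m => SIB x m) :=
  fun m => ⟨isClosed_SIB x m, isOpen_SIB x m, SIB_nonempty x m, Set.Subset.rfl⟩

/-- pieces avoiding a countable `A` with `closure A ⊆ A ∪ {x}` -/
lemma pieces_exist {x : N} {A : Set N} (hcnt : A.Countable) (hclA : closure A ⊆ A ∪ {x}) :
    ∃ P : ℕ → Set N, Pieces x P ∧ ∀ m, P m ∩ A = ∅ := by
  have hstep : ∀ m : ℕ, ∃ Q : Set N,
      (IsClosed Q ∧ IsOpen Q ∧ Q.Nonempty ∧ Q ⊆ SIB x m) ∧ Q ∩ A = ∅ := by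
    intro m
    obtain ⟨q, hq1, hq2⟩ := exists_mem_stdS_not_mem
      (hcnt.union (Set.countable_singleton x)) (pre x m ++ [x m + 1])
    have hq3 : q ∉ closure A := by
      intro hc
      exact hq2 (hclA hc)
    have hopen : IsOpen ((closure A)ᶜ ∩ SIB x m) :=
      (isClosed_closure).isOpen_compl.inter (isOpen_SIB x m)
    obtain ⟨n, hn⟩ := exists_cylinder_subset hopen ⟨hq3, hq1⟩
    refine ⟨stdS (pre q n), ⟨isClosed_stdS _, isOpen_stdS _, stdS_nonempty _,
      (hn.trans Set.inter_subset_right)⟩, ?_⟩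
    apply Set.eq_empty_of_forall_notMem
    rintro v ⟨hv1, hv2⟩
    exact (hn hv1).1 (subset_closure hv2)
  choose P hP1 hP2 using hstep
  exact ⟨P, hP1, hP2⟩

end S13

namespace S13

open Cardinal in
/-- system of distinct representatives -/
lemma sdr {ι : Type} (X : ι → Set N) (hι : #ι ≤ #N) (hX : ∀ i, #N ≤ #(X i)) :
    ∃ g : ι → N, Function.Injective g ∧ ∀ i, g i ∈ X i := by
  classical
  obtain ⟨r, wo, hr⟩ := Cardinal.ord_eq ι
  have hwf : WellFounded r := IsWellFounded.wf
  set F : (i : ι) → ((j : ι) → r j i → N) → N := fun i IH =>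
    if h : (X i \ Set.range (fun j : {j // r j i} => IH j.1 j.2)).Nonempty then h.choose
    else (fun _ => 0) with hF
  set g : ι → N := hwf.fix F with hgdef
  have hgood : ∀ i, g i ∈ X i \ Set.range (fun j : {j // r j i} => g j.1) := by
    intro i
    have hne : (X i \ Set.range (fun j : {j // r j i} => g j.1)).Nonempty := by
      by_contra hcon
      rw [Set.not_nonempty_iff_eq_empty, Set.diff_eq_empty] at hcon
      have h1 : #(X i) ≤ #(Set.range (fun j : {j // r j i} => g j.1)) :=
        Cardinal.mk_le_mk_of_subset hcon
      have h2 : #(Set.range (fun j : {j // r j i} => g j.1)) ≤ #{j // r j i} :=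
        Cardinal.mk_range_le
      have h3 : #{j // r j i} < #ι := by
        have h4 := Ordinal.typein_lt_type r i
        rw [← hr, Cardinal.lt_ord] at h4
        change ((Ordinal.typein r).toRelEmbedding i).card < #ι
        exact h4
      exact absurd ((hX i).trans (h1.trans h2)) (not_le.mpr (h3.trans_le hι))
    have hunfold : g i = F i (fun j _ => g j) := hwf.fix_eq F i
    rw [hunfold, hF]
    simp only
    rw [dif_pos hne]
    exact hne.choose_spec
  refine ⟨g, ?_, fun i => (hgood i).1⟩
  intro i j hij
  by_contra hne
  rcases @trichotomous _ r wo.toTrichotomous i j with h | h | h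
  · exact (hgood j).2 ⟨⟨i, h⟩, hij⟩
  · exact hne h
  · exact (hgood i).2 ⟨⟨j, h⟩, hij.symm⟩

end S13

namespace S13

def WSub : Type := {W : List ℕ → Set N // Valid W}

lemma open_ext {U U' : Set N} (hU : IsOpen U)
    (h : ∀ v : List ℕ, stdS v ⊆ U → stdS v ⊆ U') : U ⊆ U' := by
  intro y hy
  obtain ⟨n, hn⟩ := exists_cylinder_subset hU hy
  exact h _ hn (mem_stdS_pre y n)

open scoped Classical in
noncomputable def encW : WSub → N := fun Wv => fun n =>
  if stdS ((Denumerable.eqv (List ℕ × List ℕ)).symm n).2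
      ⊆ Wv.1 ((Denumerable.eqv (List ℕ × List ℕ)).symm n).1 then 1 else 0

lemma encW_inj : Function.Injective encW := by
  classical
  intro Wv Wv' h
  have key : ∀ a v : List ℕ, stdS v ⊆ Wv.1 a ↔ stdS v ⊆ Wv'.1 a := by
    intro a v
    have h1 : (if stdS v ⊆ Wv.1 a then (1:ℕ) else 0)
        = (if stdS v ⊆ Wv'.1 a then (1:ℕ) else 0) := by
      have h2 := congrFun h ((Denumerable.eqv (List ℕ × List ℕ)) (a, v))
      simp only [encW, Equiv.symm_apply_apply] at h2
      convert h2 using 2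
    by_cases hc : stdS v ⊆ Wv.1 a
    · rw [if_pos hc] at h1
      constructor
      · intro _
        by_contra hc'
        rw [if_neg hc'] at h1
        omega
      · intro _; exact hc
    · rw [if_neg hc] at h1
      constructor
      · intro hcc; exact absurd hcc hc
      · intro hc'
        by_contra _
        rw [if_pos hc'] at h1
        omega
  apply Subtype.ext
  funext a
  apply Set.Subset.antisymm
  · exact open_ext (Wv.2.open' a) (fun v hv => (key a v).mp hv)
  · exact open_ext (Wv'.2.open' a) (fun v hv => (key a v).mpr hv)

/-- the representable points for a scheme -/
def XW (Wv : WSub) : Set N := {x | Nonempty (Cert Wv.1 x)}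

open Cardinal in
lemma XW_big (Wv : WSub) : #N ≤ #(XW Wv) := by
  obtain ⟨f, hfinj, hf⟩ := play_lemma Wv.2
  have : Function.Injective (fun ε => (⟨f ε, hf ε⟩ : XW Wv)) := by
    intro a b hab
    exact hfinj (congrArg Subtype.val hab)
  exact Cardinal.mk_le_of_injective this

noncomputable def gW : WSub → N :=
  (sdr XW (Cardinal.mk_le_of_injective encW_inj) XW_big).choose

lemma gW_inj : Function.Injective gW :=
  (sdr XW (Cardinal.mk_le_of_injective encW_inj) XW_big).choose_spec.1

lemma gW_mem (Wv : WSub) : Nonempty (Cert Wv.1 (gW Wv)) :=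
  (sdr XW (Cardinal.mk_le_of_injective encW_inj) XW_big).choose_spec.2 Wv

noncomputable def certOf (Wv : WSub) : Cert Wv.1 (gW Wv) := (gW_mem Wv).some

noncomputable def piecesOf (Wv : WSub) : ℕ → Set N :=
  (pieces_exist (certOf Wv).hcnt (certOf Wv).hclA).choose

lemma piecesOf_spec (Wv : WSub) :
    Pieces (gW Wv) (piecesOf Wv) ∧ ∀ m, piecesOf Wv m ∩ (certOf Wv).A = ∅ :=
  (pieces_exist (certOf Wv).hcnt (certOf Wv).hclA).choose_spec

open scoped Classical in
noncomputable def Fdef : N → Set N := fun x =>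
  if h : ∃ Wv, gW Wv = x then ⋃ m, piecesOf h.choose m else ⋃ m, SIB x m

lemma Fdef_pieces (x : N) : ∃ P : ℕ → Set N, Pieces x P ∧ Fdef x = ⋃ m, P m := by
  classical
  rw [Fdef]
  by_cases h : ∃ Wv, gW Wv = x
  · rw [dif_pos h]
    refine ⟨piecesOf h.choose, ?_, rfl⟩
    have := (piecesOf_spec h.choose).1
    rwa [h.choose_spec] at this
  · rw [dif_neg h]
    exact ⟨fun m => SIB x m, pieces_classic x, rfl⟩

lemma Fdef_eq (Wv : WSub) : Fdef (gW Wv) = ⋃ m, piecesOf Wv m := by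
  classical
  have h : ∃ Wv', gW Wv' = gW Wv := ⟨Wv, rfl⟩
  rw [Fdef, dif_pos h]
  have : h.choose = Wv := gW_inj h.choose_spec
  rw [this]

end S13

/-- There is a function `F : ω^ω → τ_N \ {∅}` with `Cl_{τ_N}(F(x)) = F(x) ∪ {x}` such that for
every regular open π-base Souslin scheme `W` on the Baire space with nonempty leaves there are
`p, x` with `fruit_p(W) = {x}`, `shoot_{p↾n}(W) ↛ {x} ∪ F(x)` for all `n`, and
`fruit_p(V) = {x}` for every regular semi-open Souslin scheme `V` on the Baire space with
`Int(V, τ_N) = W`. -/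
theorem statement13 :
    ∃ F : (ℕ → ℕ) → Set (ℕ → ℕ),
      (∀ x, IsOpen (F x) ∧ (F x).Nonempty) ∧
      (∀ x, closure (F x) = F x ∪ {x}) ∧
      ∀ W : List ℕ → Set (ℕ → ℕ),
        RegularScheme W →
        PiBaseScheme (inferInstance : TopologicalSpace (ℕ → ℕ)) W →
        NonemptyLeaves W →
        ∃ p x : ℕ → ℕ,
          fruit W p = {x} ∧
          (∀ n : ℕ, ¬ Engulfs (shoot W (pre p n)) ({x} ∪ F x)) ∧
          ∀ V : List ℕ → Set (ℕ → ℕ),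
            RegularScheme V →
            SemiOpenScheme (inferInstance : TopologicalSpace (ℕ → ℕ)) V →
            (∀ a : List ℕ, interior (V a) = W a) →
            fruit V p = {x} := by
  classical
  refine ⟨S13.Fdef, ?_, ?_, ?_⟩
  · intro x
    obtain ⟨P, hP, hFP⟩ := S13.Fdef_pieces x
    rw [hFP]
    exact ⟨S13.pieces_open hP, S13.pieces_nonempty hP⟩
  · intro x
    obtain ⟨P, hP, hFP⟩ := S13.Fdef_pieces x
    rw [hFP]
    exact S13.pieces_closure hP
  · intro W hreg hpib hnel
    set Wv : S13.WSub := ⟨W, hreg, hpib, hnel⟩ with hWv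
    set x := S13.gW Wv with hx
    set C := S13.certOf Wv with hC
    refine ⟨C.p, x, C.hfruit, ?_, ?_⟩
    · intro n hEng
      obtain ⟨G, ⟨k, rfl⟩, hsub⟩ := hEng
      obtain ⟨z, hz1, hz2⟩ := C.hwit n k
      have hzx : z ≠ x := by
        intro h
        rw [h] at hz2
        exact C.hxA hz2
      have hzF : z ∈ S13.Fdef x := by
        rcases hsub hz1 with h | h
        · exact absurd (Set.mem_singleton_iff.mp h) hzx
        · exact h
      rw [hx, S13.Fdef_eq] at hzF
      obtain ⟨m, hm⟩ := Set.mem_iUnion.mp hzF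
      have := (S13.piecesOf_spec Wv).2 m
      rw [Set.eq_empty_iff_forall_notMem] at this
      exact this z ⟨hm, hz2⟩
    · intro V _ hsemi hint
      exact C.hV V ‹RegularScheme V› hsemi hint
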